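/- Let k ≥ 12 be divisible by 6. Then every red/blue edge-coloring of the complete graph on the vertex set of all k-element subsets of a (7k/3)-element set contains a monochromatic triangle A, B, C with A ∩ B ∩ C = ∅. -/

import Mathlib

/-- Block `i` of size `m`: the interval `[m*i, m*i + m)`. -/
def blkAux (m i : ℕ) : Finset ℕ := Finset.Ico (m * i) (m * i + m)

/-- Union of the blocks indexed by a finite set `S`. -/
def Vblk (m : ℕ) (S : Finset ℕ) : Finset ℕ := S.biUnion (blkAux m)

lemma mem_blkAux {m i x : ℕ} (h : x ∈ blkAux m i) : m * i ≤ x ∧ x < m * i + m := by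
  simpa [blkAux] using h

lemma blkAux_idx {m i j x : ℕ} (hi : x ∈ blkAux m i) (hj : x ∈ blkAux m j) : i = j := by
  by_contra hne
  obtain ⟨h1, h2⟩ := mem_blkAux hi
  obtain ⟨h3, h4⟩ := mem_blkAux hj
  rcases Nat.lt_or_ge i j with h | h
  · have hle : m * (i + 1) ≤ m * j := Nat.mul_le_mul (le_refl m) h
    rw [Nat.mul_succ] at hle
    omega
  · have h' : j < i := lt_of_le_of_ne h fun hji => hne hji.symm
    have hle : m * (j + 1) ≤ m * i := Nat.mul_le_mul (le_refl m) h'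
    rw [Nat.mul_succ] at hle
    omega

lemma Vblk_inter (m : ℕ) (S T : Finset ℕ) : Vblk m S ∩ Vblk m T = Vblk m (S ∩ T) := by
  ext x
  simp only [Vblk, Finset.mem_inter, Finset.mem_biUnion]
  constructor
  · rintro ⟨⟨i, hiS, hxi⟩, ⟨j, hjT, hxj⟩⟩
    have hij : i = j := blkAux_idx hxi hxj
    exact ⟨i, ⟨hiS, hij ▸ hjT⟩, hxi⟩
  · rintro ⟨i, ⟨hiS, hiT⟩, hxi⟩
    exact ⟨⟨i, hiS, hxi⟩, ⟨i, hiT, hxi⟩⟩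

lemma Vblk_card (m : ℕ) (S : Finset ℕ) : (Vblk m S).card = S.card * m := by
  rw [Vblk, Finset.card_biUnion]
  · have : ∀ i ∈ S, (blkAux m i).card = m := by
      intro i _
      simp [blkAux, Nat.card_Ico]
    rw [Finset.sum_congr rfl this, Finset.sum_const, smul_eq_mul]
  · intro i _ j _ hij
    show Disjoint (blkAux m i) (blkAux m j)
    rw [Finset.disjoint_left]
    intro x hx hx'
    exact hij (blkAux_idx hx hx')

lemma Vblk_subset_range {m : ℕ} {S : Finset ℕ} (hS : S ⊆ Finset.range 7) :
    Vblk m S ⊆ Finset.range (7 * m) := by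
  intro x hx
  simp only [Vblk, Finset.mem_biUnion] at hx
  obtain ⟨i, hiS, hxi⟩ := hx
  obtain ⟨h1, h2⟩ := mem_blkAux hxi
  have hi7 : i < 7 := Finset.mem_range.mp (hS hiS)
  have : m * (i + 1) ≤ m * 7 := Nat.mul_le_mul (le_refl m) hi7
  rw [Nat.mul_succ] at this
  rw [Finset.mem_range]
  omega

lemma Vblk_ne {m : ℕ} (hm : 0 < m) {S T : Finset ℕ} {i : ℕ} (hiS : i ∈ S) (hiT : i ∉ T) :
    Vblk m S ≠ Vblk m T := by
  intro heq
  have hmem : m * i ∈ Vblk m S := by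
    simp only [Vblk, Finset.mem_biUnion]
    exact ⟨i, hiS, by simp [blkAux]; omega⟩
  rw [heq] at hmem
  simp only [Vblk, Finset.mem_biUnion] at hmem
  obtain ⟨j, hjT, hxj⟩ := hmem
  have hself : m * i ∈ blkAux m i := by simp [blkAux]; omega
  exact hiT (blkAux_idx hxj hself ▸ hjT)

lemma Vblk_empty (m : ℕ) : Vblk m ∅ = ∅ := by simp [Vblk]

theorem mono_triangle_empty_intersection_seven_thirds (k : ℕ) (hk : 12 ≤ k) (hdvd : 6 ∣ k)
    (c : Finset ℕ → Finset ℕ → Bool) (hsym : ∀ A B, c A B = c B A) :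
    ∃ A B C : Finset ℕ,
      A ⊆ Finset.range (7 * k / 3) ∧ B ⊆ Finset.range (7 * k / 3) ∧
      C ⊆ Finset.range (7 * k / 3) ∧
      A.card = k ∧ B.card = k ∧ C.card = k ∧
      A ≠ B ∧ A ≠ C ∧ B ≠ C ∧
      A ∩ B ∩ C = ∅ ∧
      c A B = c A C ∧ c A C = c B C := by
  by_contra hcon
  push_neg at hcon
  have h3 : 3 ∣ k := by omega
  set m := k / 3 with hmdef
  have hk3 : k = 3 * m := by omega
  have hm : 0 < m := by omega
  have hn : 7 * k / 3 = 7 * m := by omega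
  -- key: no monochromatic good triangle among block-unions
  have key : ∀ S T U : Finset ℕ, S ⊆ Finset.range 7 → T ⊆ Finset.range 7 →
      U ⊆ Finset.range 7 → S.card = 3 → T.card = 3 → U.card = 3 →
      S ≠ T → S ≠ U → T ≠ U → S ∩ T ∩ U = ∅ →
      c (Vblk m S) (Vblk m T) = c (Vblk m S) (Vblk m U) →
      c (Vblk m S) (Vblk m U) ≠ c (Vblk m T) (Vblk m U) := by
    intro S T U hS hT hU cS cT cU nST nSU nTU hint
    have vne : ∀ {X Y : Finset ℕ}, X.card = 3 → Y.card = 3 → X ≠ Y →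
        Vblk m X ≠ Vblk m Y := by
      intro X Y cX cY hne
      have hns : ¬ X ⊆ Y := fun hsub =>
        hne (Finset.eq_of_subset_of_card_le hsub (by omega))
      obtain ⟨i, hiX, hiY⟩ := Finset.not_subset.mp hns
      exact Vblk_ne hm hiX hiY
    refine hcon (Vblk m S) (Vblk m T) (Vblk m U)
      (by rw [hn]; exact Vblk_subset_range hS)
      (by rw [hn]; exact Vblk_subset_range hT)
      (by rw [hn]; exact Vblk_subset_range hU)
      (by rw [Vblk_card, cS]; omega)
      (by rw [Vblk_card, cT]; omega)
      (by rw [Vblk_card, cU]; omega)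
      (vne cS cT nST) (vne cS cU nSU) (vne cT cU nTU)
      (by rw [Vblk_inter, Vblk_inter, hint, Vblk_empty])
  have bl : ∀ s x y : Bool, x ≠ s → y ≠ s → x = y := by decide
  have ha : ({0, 1, 2} : Finset ℕ) ⊆ Finset.range 7 := by decide
  have ca : ({0, 1, 2} : Finset ℕ).card = 3 := by decide
  set av := Vblk m ({0, 1, 2} : Finset ℕ) with hav
  -- derived rule: for a good apex configuration, the three apex colors are not all equal
  have nae : ∀ P Q R : Finset ℕ,
      (P ⊆ Finset.range 7 ∧ Q ⊆ Finset.range 7 ∧ R ⊆ Finset.range 7 ∧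
       P.card = 3 ∧ Q.card = 3 ∧ R.card = 3 ∧
       ({0, 1, 2} : Finset ℕ) ≠ P ∧ ({0, 1, 2} : Finset ℕ) ≠ Q ∧
       ({0, 1, 2} : Finset ℕ) ≠ R ∧ P ≠ Q ∧ P ≠ R ∧ Q ≠ R ∧
       ({0, 1, 2} : Finset ℕ) ∩ P ∩ Q = ∅ ∧ ({0, 1, 2} : Finset ℕ) ∩ P ∩ R = ∅ ∧
       ({0, 1, 2} : Finset ℕ) ∩ Q ∩ R = ∅ ∧ P ∩ Q ∩ R = ∅) →
      ¬(c av (Vblk m P) = c av (Vblk m Q) ∧ c av (Vblk m Q) = c av (Vblk m R)) := by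
    rintro P Q R ⟨hP, hQ, hR, cP, cQ, cR, nAP, nAQ, nAR, nPQ, nPR, nQR, iPQ, iPR, iQR, iPQR⟩
      ⟨e1, e2⟩
    have k1 := key ({0, 1, 2} : Finset ℕ) P Q ha hP hQ ca cP cQ nAP nAQ nPQ iPQ e1
    have k2 := key ({0, 1, 2} : Finset ℕ) P R ha hP hR ca cP cR nAP nAR nPR iPR
      (e1.trans e2)
    have k3 := key ({0, 1, 2} : Finset ℕ) Q R ha hQ hR ca cQ cR nAQ nAR nQR iQR e2
    have k4 := key P Q R hP hQ hR cP cQ cR nPQ nPR nQR iPQR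
    have w1 : c (Vblk m P) (Vblk m Q) ≠ c av (Vblk m P) := by
      rw [e1]; exact Ne.symm k1
    have w2 : c (Vblk m P) (Vblk m R) ≠ c av (Vblk m P) := by
      rw [e1, e2]; exact Ne.symm k2
    have w3 : c (Vblk m Q) (Vblk m R) ≠ c av (Vblk m P) := by
      rw [e1, e2]; exact Ne.symm k3
    exact k4 (bl _ _ _ w1 w2) (bl _ _ _ w2 w3)
  have E1 := nae ({1,3,5} : Finset ℕ) ({2,3,6} : Finset ℕ) ({4,5,6} : Finset ℕ) (by decide)
  have E2 := nae ({1,3,5} : Finset ℕ) ({4,5,6} : Finset ℕ) ({0,4,6} : Finset ℕ) (by decide)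
  have E3 := nae ({1,3,5} : Finset ℕ) ({3,5,6} : Finset ℕ) ({2,4,6} : Finset ℕ) (by decide)
  have E4 := nae ({1,3,5} : Finset ℕ) ({0,3,4} : Finset ℕ) ({2,4,6} : Finset ℕ) (by decide)
  have E5 := nae ({1,3,5} : Finset ℕ) ({0,4,5} : Finset ℕ) ({2,3,4} : Finset ℕ) (by decide)
  have E6 := nae ({2,3,6} : Finset ℕ) ({4,5,6} : Finset ℕ) ({0,4,5} : Finset ℕ) (by decide)
  have E7 := nae ({2,3,6} : Finset ℕ) ({4,5,6} : Finset ℕ) ({1,3,4} : Finset ℕ) (by decide)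
  have E8 := nae ({2,3,6} : Finset ℕ) ({3,5,6} : Finset ℕ) ({0,1,5} : Finset ℕ) (by decide)
  have E9 := nae ({2,3,6} : Finset ℕ) ({1,3,4} : Finset ℕ) ({0,4,6} : Finset ℕ) (by decide)
  have E10 := nae ({4,5,6} : Finset ℕ) ({3,5,6} : Finset ℕ) ({0,3,4} : Finset ℕ) (by decide)
  have E11 := nae ({4,5,6} : Finset ℕ) ({3,5,6} : Finset ℕ) ({1,3,4} : Finset ℕ) (by decide)
  have E12 := nae ({4,5,6} : Finset ℕ) ({3,5,6} : Finset ℕ) ({2,3,4} : Finset ℕ) (by decide)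
  have E13 := nae ({4,5,6} : Finset ℕ) ({0,1,5} : Finset ℕ) ({2,4,6} : Finset ℕ) (by decide)
  have E14 := nae ({3,5,6} : Finset ℕ) ({0,4,5} : Finset ℕ) ({1,3,4} : Finset ℕ) (by decide)
  have E15 := nae ({3,5,6} : Finset ℕ) ({0,4,5} : Finset ℕ) ({2,4,6} : Finset ℕ) (by decide)
  have E16 := nae ({3,5,6} : Finset ℕ) ({2,3,4} : Finset ℕ) ({0,4,6} : Finset ℕ) (by decide)
  set_option synthInstance.maxSize 10000 in
  have final : ∀ b1 b2 b3 b4 b5 b6 b7 b8 b9 b10 b11 : Bool,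
      ¬(b6 = b8 ∧ b8 = b11) →
      ¬(b6 = b11 ∧ b11 = b4) →
      ¬(b6 = b10 ∧ b10 = b9) →
      ¬(b6 = b2 ∧ b2 = b9) →
      ¬(b6 = b3 ∧ b3 = b7) →
      ¬(b8 = b11 ∧ b11 = b3) →
      ¬(b8 = b11 ∧ b11 = b5) →
      ¬(b8 = b10 ∧ b10 = b1) →
      ¬(b8 = b5 ∧ b5 = b4) →
      ¬(b11 = b10 ∧ b10 = b2) →
      ¬(b11 = b10 ∧ b10 = b5) →
      ¬(b11 = b10 ∧ b10 = b7) →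
      ¬(b11 = b1 ∧ b1 = b9) →
      ¬(b10 = b3 ∧ b3 = b5) →
      ¬(b10 = b3 ∧ b3 = b9) →
      ¬(b10 = b7 ∧ b7 = b4) → False := by decide
  exact final (c av (Vblk m {0,1,5})) (c av (Vblk m {0,3,4})) (c av (Vblk m {0,4,5}))
    (c av (Vblk m {0,4,6})) (c av (Vblk m {1,3,4})) (c av (Vblk m {1,3,5}))
    (c av (Vblk m {2,3,4})) (c av (Vblk m {2,3,6})) (c av (Vblk m {2,4,6}))
    (c av (Vblk m {3,5,6})) (c av (Vblk m {4,5,6}))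
    E1 E2 E3 E4 E5 E6 E7 E8 E9 E10 E11 E12 E13 E14 E15 E16
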